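/- Suppose E ⊂ K ⊂ ℝ² with E and K bounded open convex sets, and let x, y ∈ E be distinct points on a common chord such that the chord of E through x, y has endpoints a, b and the chord of K through x, y has endpoints a', b' with a' = a (the left endpoints coincide) but |b' − x| > |b − x| (K extends strictly beyond E on the b side). Then the Hilbert midpoint of x and y in K is strictly different from (indeed strictly closer to x than) the Hilbert midpoint of x and y in E. -/

import Mathlib

open scoped Classical

/-- The Hilbert distance of a set `K ⊆ ℝⁿ` at `x, y`: parametrizing the line through
`x, y` as `t ↦ x + t•(y−x)` (so `x` at `t = 0`, `y` at `t = 1`), the boundary points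
are `a` at `S = sInf {t | x + t•(y−x) ∈ K}` and `b` at `T = sSup {t | x + t•(y−x) ∈ K}`,
and `d_K(x,y) = (1/2)·log((|y−a|/|x−a|)·(|x−b|/|y−b|))
             = (1/2)·log(((1−S)/(−S))·(T/(T−1)))`. -/
noncomputable def hilbertDist {n : ℕ} (K : Set (EuclideanSpace ℝ (Fin n)))
    (x y : EuclideanSpace ℝ (Fin n)) : ℝ :=
  if x = y then 0
  else
    (1 / 2) * Real.log
      (((1 - sInf {t : ℝ | x + t • (y - x) ∈ K}) / (0 - sInf {t : ℝ | x + t • (y - x) ∈ K})) *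
        (sSup {t : ℝ | x + t • (y - x) ∈ K} / (sSup {t : ℝ | x + t • (y - x) ∈ K} - 1)))

set_option maxHeartbeats 1000000 in
lemma keyAlg (S T₁ T₂ s₁ s₂ : ℝ) (hS : S < 0) (hT₁ : 1 < T₁) (hT₁₂ : T₁ < T₂)
    (hs₁ : 0 < s₁) (hs₁' : s₁ < 1) (hs₂ : 0 < s₂) (hs₂' : s₂ < 1)
    (h₁ : (s₁ - S)^2 * (T₁ * (T₁ - 1)) = (-S) * (1 - S) * (T₁ - s₁)^2)
    (h₂ : (s₂ - S)^2 * (T₂ * (T₂ - 1)) = (-S) * (1 - S) * (T₂ - s₂)^2) :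
    s₂ < s₁ := by
  have hc : 0 < (-S) * (1 - S) := mul_pos (by linarith) (by linarith)
  have hT₂ : 1 < T₂ := lt_trans hT₁ hT₁₂
  have hT₂pos : (0:ℝ) < T₂ := by linarith
  have hT1pos : 0 < T₁ * (T₁ - 1) := mul_pos (by linarith) (by linarith)
  have hP : (s₁ - S)^2 * (T₂ * (T₂ - 1)) > (-S) * (1 - S) * (T₂ - s₁)^2 := by
    rcases le_or_gt (T₂ * (1 - 2*s₁) + s₁) 0 with h | h
    · have h2s : 1 - 2*s₁ < 0 := by nlinarith
      have e1 : (s₁ - S)^2 > (-S) * (1 - S) := by nlinarith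
      have e2 : T₂ * (T₂ - 1) > (T₂ - s₁)^2 := by nlinarith
      nlinarith [mul_pos hc (mul_pos hT₂pos (show (0:ℝ) < T₂ - 1 by linarith))]
    · have hbr : 0 < T₁*(T₂*(1-2*s₁)+s₁^2) + s₁^2*(T₂-1) := by
        rcases le_or_gt 0 (T₂*(1-2*s₁)+s₁^2) with hc2 | hc2
        · have h3 := mul_nonneg (show (0:ℝ) ≤ T₁ - 1 by linarith) hc2
          nlinarith [mul_pos hT₂pos (mul_pos (show (0:ℝ) < 1 - s₁ by linarith)
            (show (0:ℝ) < 1 - s₁ by linarith))]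
        · have h3 := mul_pos (show (0:ℝ) < T₂ - T₁ by linarith) (neg_pos.2 hc2)
          have h4 := mul_pos (show (0:ℝ) < T₂ - s₁ by linarith) h
          nlinarith
      have hΔ : T₂ * (T₂ - 1) * (T₁ - s₁)^2 > T₁ * (T₁ - 1) * (T₂ - s₁)^2 := by
        have := mul_pos (show (0:ℝ) < T₂ - T₁ by linarith) hbr
        nlinarith [this]
      have h₁' : (s₁-S)^2*(T₂*(T₂-1))*(T₁*(T₁-1)) = (-S)*(1-S)*(T₁-s₁)^2*(T₂*(T₂-1)) := by
        linear_combination (T₂*(T₂-1)) * h₁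
      have hA := mul_pos hc (sub_pos.2 hΔ)
      have key6 : ((-S)*(1-S)*(T₂-s₁)^2) * (T₁*(T₁-1)) < ((s₁-S)^2*(T₂*(T₂-1))) * (T₁*(T₁-1)) := by
        linarith [hA, h₁']
      exact lt_of_mul_lt_mul_right key6 hT1pos.le
  by_contra hcon
  push_neg at hcon
  have hbr2 : (0:ℝ) ≤ (s₁ + s₂ - 2*S) * (T₂*(T₂-1)) + (-S)*(1-S)*(2*T₂ - s₁ - s₂) := by
    have := mul_pos (show (0:ℝ) < s₁ + s₂ - 2*S by linarith)
      (mul_pos hT₂pos (show (0:ℝ) < T₂ - 1 by linarith))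
    have := mul_pos hc (show (0:ℝ) < 2*T₂ - s₁ - s₂ by linarith)
    linarith
  have hprod := mul_nonneg (sub_nonneg.2 hcon) hbr2
  nlinarith [hprod, h₂, hP]

section Geom

variable {V : Type*} [NormedAddCommGroup V] [NormedSpace ℝ V]

set_option maxHeartbeats 1000000 in
lemma slice_eq {C : Set V} (hop : IsOpen C) (hcv : Convex ℝ C)
    {x y : V} (hx : x ∈ C) (hy : y ∈ C)
    {ta tb : ℝ} (hta : ta < 0) (htb : 1 < tb)
    (haC : x + ta • (y - x) ∈ closure C) (haC' : x + ta • (y - x) ∉ C)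
    (hbC : x + tb • (y - x) ∈ closure C) (hbC' : x + tb • (y - x) ∉ C) :
    {t : ℝ | x + t • (y - x) ∈ C} = Set.Ioo ta tb := by
  have hyI : y ∈ interior C := by rw [hop.interior_eq]; exact hy
  have hxI : x ∈ interior C := by rw [hop.interior_eq]; exact hx
  ext t
  simp only [Set.mem_setOf_eq, Set.mem_Ioo]
  constructor
  · intro ht
    constructor
    · by_contra hle
      push_neg at hle
      rcases eq_or_lt_of_le hle with heq | hlt
      · exact haC' (by rw [heq] at ht; exact ht)
      · apply haC'
        have h1t : (0:ℝ) < 1 - t := by linarith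
        have hθ0 : 0 < (ta - t)/(1 - t) := div_pos (by linarith) h1t
        have hθ1 : (ta - t)/(1 - t) < 1 := by rw [div_lt_one h1t]; linarith
        have hcombo : (1 - (ta - t)/(1 - t)) • (x + t • (y - x)) + ((ta - t)/(1 - t)) • y
            = x + ta • (y - x) := by
          have : (1 - (ta - t)/(1 - t)) • (x + t • (y - x)) + ((ta - t)/(1 - t)) • y
              = x + ((1 - (ta - t)/(1 - t)) * t + (ta - t)/(1 - t)) • (y - x) := by module
          rw [this]
          congr 1
          congr 1
          field_simp
          try ring
        rw [← hcombo]
        exact hcv ht hy (by linarith) hθ0.le (by ring)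
    · by_contra hle
      push_neg at hle
      rcases eq_or_lt_of_le hle with heq | hlt
      · exact hbC' (by rw [← heq] at ht; exact ht)
      · apply hbC'
        have ht0 : (0:ℝ) < t := by linarith
        have hθ0 : 0 < tb/t := div_pos (by linarith) ht0
        have hθ1 : tb/t < 1 := by rw [div_lt_one ht0]; exact hlt
        have hcombo : (1 - tb/t) • x + (tb/t) • (x + t • (y - x)) = x + tb • (y - x) := by
          have : (1 - tb/t) • x + (tb/t) • (x + t • (y - x))
              = x + (tb/t * t) • (y - x) := by module
          rw [this]
          congr 1
          congr 1
          field_simp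
          try ring
        rw [← hcombo]
        exact hcv hx ht (by linarith) hθ0.le (by ring)
  · intro ⟨h1, h2⟩
    rcases lt_or_ge t 1 with hlt | hge
    · have h1ta : (0:ℝ) < 1 - ta := by linarith
      have hθ0 : 0 < (t - ta)/(1 - ta) := div_pos (by linarith) h1ta
      have hθ1 : (t - ta)/(1 - ta) ≤ 1 := by rw [div_le_one h1ta]; linarith
      have hcombo : (1 - (t - ta)/(1 - ta)) • (x + ta • (y - x)) + ((t - ta)/(1 - ta)) • y
          = x + t • (y - x) := by
        have : (1 - (t - ta)/(1 - ta)) • (x + ta • (y - x)) + ((t - ta)/(1 - ta)) • y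
            = x + ((1 - (t - ta)/(1 - ta)) * ta + (t - ta)/(1 - ta)) • (y - x) := by module
        rw [this]
        congr 1
        congr 1
        field_simp
        try ring
      have := hcv.combo_closure_interior_mem_interior (a := 1 - (t - ta)/(1 - ta))
        (b := (t - ta)/(1 - ta)) haC hyI (by linarith) hθ0 (by ring)
      rw [hcombo, hop.interior_eq] at this
      exact this
    · have htb0 : (0:ℝ) < tb := by linarith
      have hθ0 : 0 < t/tb := div_pos (by linarith) htb0
      have hθ1 : t/tb < 1 := by rw [div_lt_one htb0]; exact h2
      have hcombo : (t/tb) • (x + tb • (y - x)) + (1 - t/tb) • x = x + t • (y - x) := by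
        have : (t/tb) • (x + tb • (y - x)) + (1 - t/tb) • x
            = x + (t/tb * tb) • (y - x) := by module
        rw [this]
        congr 1
        congr 1
        field_simp
        try ring
      have := hcv.combo_closure_interior_mem_interior (a := t/tb) (b := 1 - t/tb)
        hbC hxI hθ0.le (by linarith) (by ring)
      rw [hcombo, hop.interior_eq] at this
      exact this

lemma sbtw_left {x y a : V} (h : Sbtw ℝ a x y) :
    ∃ ta : ℝ, ta < 0 ∧ a = x + ta • (y - x) := by
  obtain ⟨θ, ⟨hθ0, hθ1⟩, hθx⟩ := h.mem_image_Ioo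
  rw [AffineMap.lineMap_apply_module] at hθx
  refine ⟨-θ/(1-θ), div_neg_of_neg_of_pos (by linarith) (by linarith), ?_⟩
  have h1θ : (1:ℝ) - θ ≠ 0 := by intro hh; rw [sub_eq_zero] at hh; linarith
  apply smul_right_injective V h1θ
  show (1-θ) • a = (1-θ) • (x + (-θ/(1-θ)) • (y - x))
  have hco : (1-θ) * (-θ/(1-θ)) = -θ := by field_simp
  have expand : (1-θ) • (x + (-θ/(1-θ)) • (y - x))
      = (1-θ) • x + ((1-θ) * (-θ/(1-θ))) • (y - x) := by module
  rw [expand, hco]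
  have hax : (1-θ) • a = x - θ • y := eq_sub_of_add_eq hθx
  rw [hax]
  module

lemma sbtw_right {x y b : V} (h : Sbtw ℝ x y b) :
    ∃ tb : ℝ, 1 < tb ∧ b = x + tb • (y - x) := by
  obtain ⟨σ, ⟨hσ0, hσ1⟩, hσy⟩ := h.mem_image_Ioo
  rw [AffineMap.lineMap_apply_module] at hσy
  refine ⟨1/σ, by rw [lt_div_iff₀ hσ0]; linarith, ?_⟩
  apply smul_right_injective V (ne_of_gt hσ0)
  show σ • b = σ • (x + (1/σ) • (y - x))
  have hco : σ * (1/σ) = 1 := by field_simp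
  have expand : σ • (x + (1/σ) • (y - x)) = σ • x + (σ * (1/σ)) • (y - x) := by module
  rw [expand, hco]
  have hby : σ • b = y - (1-σ) • x := eq_sub_of_add_eq' hσy
  rw [hby]
  module

end Geom

set_option maxHeartbeats 1000000 in
lemma mid_param {n : ℕ} {C : Set (EuclideanSpace ℝ (Fin n))} {x y : EuclideanSpace ℝ (Fin n)}
    {ta tb s : ℝ} (hta : ta < 0) (htb : 1 < tb) (hs : 0 < s) (hs1 : s < 1)
    (hv : y - x ≠ 0)
    (hslice : {t : ℝ | x + t • (y - x) ∈ C} = Set.Ioo ta tb)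
    (heq : hilbertDist C x (x + s • (y - x)) = hilbertDist C (x + s • (y - x)) y) :
    (s - ta)^2 * (tb * (tb - 1)) = (-ta) * (1 - ta) * (tb - s)^2 := by
  have h1s : (0:ℝ) < 1 - s := by linarith
  have hmem : ∀ u : ℝ, (x + u • (y - x) ∈ C) ↔ u ∈ Set.Ioo ta tb :=
    fun u => Set.ext_iff.1 hslice u
  have set1 : {t : ℝ | x + t • (x + s • (y - x) - x) ∈ C} = Set.Ioo (ta/s) (tb/s) := by
    ext t
    simp only [Set.mem_setOf_eq, add_sub_cancel_left, smul_smul]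
    rw [hmem (t * s)]
    simp only [Set.mem_Ioo]
    constructor
    · rintro ⟨p, q⟩; exact ⟨(div_lt_iff₀ hs).2 p, (lt_div_iff₀ hs).2 q⟩
    · rintro ⟨p, q⟩; exact ⟨(div_lt_iff₀ hs).1 p, (lt_div_iff₀ hs).1 q⟩
  have set2 : {t : ℝ | (x + s • (y - x)) + t • (y - (x + s • (y - x))) ∈ C}
      = Set.Ioo ((ta - s)/(1 - s)) ((tb - s)/(1 - s)) := by
    have hid : ∀ t : ℝ, (x + s • (y - x)) + t • (y - (x + s • (y - x)))
        = x + (s + t * (1 - s)) • (y - x) := by intro t; module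
    ext t
    simp only [Set.mem_setOf_eq]
    rw [hid t, hmem (s + t * (1 - s))]
    simp only [Set.mem_Ioo]
    constructor
    · rintro ⟨p, q⟩
      exact ⟨(div_lt_iff₀ h1s).2 (by linarith), (lt_div_iff₀ h1s).2 (by linarith)⟩
    · rintro ⟨p, q⟩
      have p' := (div_lt_iff₀ h1s).1 p
      have q' := (lt_div_iff₀ h1s).1 q
      exact ⟨by linarith, by linarith⟩
  have hxm : x ≠ x + s • (y - x) := by
    intro h
    have h0 : s • (y - x) = 0 := (left_eq_add.1 h)
    rcases smul_eq_zero.1 h0 with h' | h'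
    · exact hs.ne' h'
    · exact hv h'
  have hmy : x + s • (y - x) ≠ y := by
    intro h
    have e : y - (x + s • (y - x)) = (1 - s) • (y - x) := by module
    have h0 : (1 - s) • (y - x) = 0 := by rw [← e, h, sub_self]
    rcases smul_eq_zero.1 h0 with h' | h'
    · linarith [h']
    · exact hv h'
  rw [hilbertDist, hilbertDist, if_neg hxm, if_neg hmy, set1, set2,
    csInf_Ioo ((div_lt_div_iff_of_pos_right hs).2 (by linarith)),
    csSup_Ioo ((div_lt_div_iff_of_pos_right hs).2 (by linarith)),
    csInf_Ioo ((div_lt_div_iff_of_pos_right h1s).2 (by linarith)),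
    csSup_Ioo ((div_lt_div_iff_of_pos_right h1s).2 (by linarith))] at heq
  have hA : 0 < (1 - ta/s)/(0 - ta/s) * ((tb/s)/(tb/s - 1)) := by
    have h1 : ta/s < 0 := div_neg_of_neg_of_pos hta hs
    have h2 : (1:ℝ) < tb/s := (one_lt_div hs).2 (by linarith)
    exact mul_pos (div_pos (by linarith) (by linarith)) (div_pos (by linarith) (by linarith))
  have hB : 0 < (1 - (ta - s)/(1 - s))/(0 - (ta - s)/(1 - s))
      * (((tb - s)/(1 - s))/((tb - s)/(1 - s) - 1)) := by
    have h1 : (ta - s)/(1 - s) < 0 := div_neg_of_neg_of_pos (by linarith) h1s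
    have h2 : (1:ℝ) < (tb - s)/(1 - s) := (one_lt_div h1s).2 (by linarith)
    exact mul_pos (div_pos (by linarith) (by linarith)) (div_pos (by linarith) (by linarith))
  have h2 : Real.log ((1 - ta/s)/(0 - ta/s) * ((tb/s)/(tb/s - 1)))
      = Real.log ((1 - (ta - s)/(1 - s))/(0 - (ta - s)/(1 - s))
        * (((tb - s)/(1 - s))/((tb - s)/(1 - s) - 1))) := by linarith
  have hAB := Real.log_injOn_pos (Set.mem_Ioi.2 hA) (Set.mem_Ioi.2 hB) h2
  have hs0 : s ≠ 0 := hs.ne'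
  have hta0 : ta ≠ 0 := hta.ne
  have h1s0 : (1:ℝ) - s ≠ 0 := h1s.ne'
  have htbs : tb - s ≠ 0 := by intro h; rw [sub_eq_zero] at h; linarith
  have hsta : s - ta ≠ 0 := by intro h; rw [sub_eq_zero] at h; linarith
  have htb1 : tb - 1 ≠ 0 := by intro h; rw [sub_eq_zero] at h; linarith
  have hts : ta - s ≠ 0 := by intro h; rw [sub_eq_zero] at h; linarith
  have htsm : tb - s - (1 - s) ≠ 0 := by intro h; apply htb1; linarith
  simp only [zero_sub] at hAB
  field_simp at hAB
  linear_combination hAB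

set_option maxHeartbeats 1000000 in
/-- Let `E ⊆ K ⊆ ℝ²` be bounded open convex sets and `x ≠ y` in `E`.
Suppose the chord of `E` through `x, y` has endpoints `a, b` (in the order `a,x,y,b`)
and the chord of `K` through `x, y` has endpoints `a', b'` (in the order `a',x,y,b'`)
with `a' = a` but `|b' − x| > |b − x|`. Then the Hilbert midpoint of `x` and `y` in
`K` is strictly closer to `x` than (in particular different from) the Hilbert
midpoint of `x` and `y` in `E`. -/
theorem hilbert_midpoint_moves_toward_x
    (E K : Set (EuclideanSpace ℝ (Fin 2)))
    (hEne : E.Nonempty) (hEbd : Bornology.IsBounded E) (hEop : IsOpen E) (hEcv : Convex ℝ E)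
    (hKne : K.Nonempty) (hKbd : Bornology.IsBounded K) (hKop : IsOpen K) (hKcv : Convex ℝ K)
    (hEK : E ⊆ K)
    (x y a b a' b' : EuclideanSpace ℝ (Fin 2)) (hx : x ∈ E) (hy : y ∈ E) (hxy : x ≠ y)
    (ha : a ∈ frontier (closure E)) (hb : b ∈ frontier (closure E))
    (ha' : a' ∈ frontier (closure K)) (hb' : b' ∈ frontier (closure K))
    (hordE : Sbtw ℝ a x y ∧ Sbtw ℝ x y b)
    (hordK : Sbtw ℝ a' x y ∧ Sbtw ℝ x y b')
    (haa' : a' = a) (hbb' : ‖b - x‖ < ‖b' - x‖)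
    (mE mK : EuclideanSpace ℝ (Fin 2))
    (hmE : mE ∈ openSegment ℝ x y ∧ hilbertDist E x mE = hilbertDist E mE y)
    (hmK : mK ∈ openSegment ℝ x y ∧ hilbertDist K x mK = hilbertDist K mK y) :
    ‖mK - x‖ < ‖mE - x‖ ∧ mK ≠ mE := by
  have hv : y - x ≠ 0 := sub_ne_zero.2 (Ne.symm hxy)
  have hnv : 0 < ‖y - x‖ := norm_pos_iff.2 hv
  -- endpoints as parameters
  obtain ⟨ta, hta, ha_eq⟩ := sbtw_left hordE.1
  obtain ⟨tb, htb, hb_eq⟩ := sbtw_right hordE.2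
  obtain ⟨tb', htb', hb'_eq⟩ := sbtw_right hordK.2
  -- frontier facts
  have haclE : a ∈ closure E := by
    have := frontier_subset_closure ha; rwa [closure_closure] at this
  have hanE : a ∉ E := fun hmem => ha.2 (interior_maximal subset_closure hEop hmem)
  have hbclE : b ∈ closure E := by
    have := frontier_subset_closure hb; rwa [closure_closure] at this
  have hbnE : b ∉ E := fun hmem => hb.2 (interior_maximal subset_closure hEop hmem)
  rw [haa'] at ha'
  have haclK : a ∈ closure K := by
    have := frontier_subset_closure ha'; rwa [closure_closure] at this
  have hanK : a ∉ K := fun hmem => ha'.2 (interior_maximal subset_closure hKop hmem)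
  have hb'clK : b' ∈ closure K := by
    have := frontier_subset_closure hb'; rwa [closure_closure] at this
  have hb'nK : b' ∉ K := fun hmem => hb'.2 (interior_maximal subset_closure hKop hmem)
  -- tb < tb'
  have hnb : ‖b - x‖ = tb * ‖y - x‖ := by
    rw [hb_eq, add_sub_cancel_left, norm_smul, Real.norm_eq_abs, abs_of_pos (by linarith)]
  have hnb' : ‖b' - x‖ = tb' * ‖y - x‖ := by
    rw [hb'_eq, add_sub_cancel_left, norm_smul, Real.norm_eq_abs, abs_of_pos (by linarith)]
  have htbtb' : tb < tb' := by
    rw [hnb, hnb'] at hbb'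
    exact lt_of_mul_lt_mul_right (by linarith) hnv.le
  -- slices
  have hsE : {t : ℝ | x + t • (y - x) ∈ E} = Set.Ioo ta tb :=
    slice_eq hEop hEcv hx hy hta htb (ha_eq ▸ haclE) (ha_eq ▸ hanE)
      (hb_eq ▸ hbclE) (hb_eq ▸ hbnE)
  have hsK : {t : ℝ | x + t • (y - x) ∈ K} = Set.Ioo ta tb' :=
    slice_eq hKop hKcv (hEK hx) (hEK hy) hta htb' (ha_eq ▸ haclK) (ha_eq ▸ hanK)
      (hb'_eq ▸ hb'clK) (hb'_eq ▸ hb'nK)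
  -- midpoint parameters
  rw [openSegment_eq_image] at hmE hmK
  obtain ⟨⟨sE, ⟨hsE0, hsE1⟩, hmE_img⟩, hmE_eq⟩ := hmE
  obtain ⟨⟨sK, ⟨hsK0, hsK1⟩, hmK_img⟩, hmK_eq⟩ := hmK
  have hmEx : mE = x + sE • (y - x) := by rw [← hmE_img]; module
  have hmKx : mK = x + sK • (y - x) := by rw [← hmK_img]; module
  rw [hmEx] at hmE_eq
  rw [hmKx] at hmK_eq
  have eE := mid_param hta htb hsE0 hsE1 hv hsE hmE_eq
  have eK := mid_param hta htb' hsK0 hsK1 hv hsK hmK_eq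
  have hlt : sK < sE := keyAlg ta tb tb' sE sK hta htb htbtb' hsE0 hsE1 hsK0 hsK1 eE eK
  constructor
  · rw [hmEx, hmKx, add_sub_cancel_left, add_sub_cancel_left, norm_smul, norm_smul,
      Real.norm_eq_abs, Real.norm_eq_abs, abs_of_pos hsK0, abs_of_pos hsE0]
    exact mul_lt_mul_of_pos_right hlt hnv
  · intro h
    rw [hmEx, hmKx] at h
    have : (sK - sE) • (y - x) = 0 := by
      have := sub_eq_zero.2 h
      rw [show x + sK • (y - x) - (x + sE • (y - x)) = (sK - sE) • (y - x) by module] at this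
      exact this
    rcases smul_eq_zero.1 this with h' | h'
    · rw [sub_eq_zero] at h'; exact absurd h' hlt.ne
    · exact hv h'
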